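/- arXiv:2205.13105 — 3 statements merged into one kernel-verified Lean document; each statement's English description precedes it below -/
import Mathlib

section
/- For any a > 0, there exist constants c₁, c₂ > 0 (depending on a) such that for all x > 0, ∑_{n≥0} xⁿ/(n!)^a ≤ c₁ exp(c₂ x^{1/a}). -/
open Real

theorem stmt_1 (a : ℝ) (ha : 0 < a) :
    ∃ c₁ c₂ : ℝ, 0 < c₁ ∧ 0 < c₂ ∧ ∀ x : ℝ, 0 < x →
      ∑' n : ℕ, x ^ n / (n.factorial : ℝ) ^ a ≤ c₁ * Real.exp (c₂ * x ^ (1 / a)) := by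
  refine ⟨2, a * 2 ^ (1 / a), by norm_num, by positivity, fun x hx => ?_⟩
  have h2x : (0:ℝ) < 2 * x := by linarith
  set z : ℝ := (2 * x) ^ (1 / a) with hz
  have hz0 : (0:ℝ) < z := rpow_pos_of_pos h2x _
  have hza : a * 2 ^ (1 / a) * x ^ (1 / a) = a * z := by
    rw [hz, mul_rpow (by norm_num) hx.le, mul_assoc]
  have key : ∀ n : ℕ, x ^ n / (n.factorial : ℝ) ^ a ≤ (1/2 : ℝ) ^ n * Real.exp (a * z) := by
    intro n
    have h1 : z ^ n / (n.factorial : ℝ) ≤ Real.exp z :=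
      Real.pow_div_factorial_le_exp z hz0.le n
    have hfac : (0:ℝ) < (n.factorial : ℝ) := by exact_mod_cast n.factorial_pos
    have h2 : (z ^ n / (n.factorial : ℝ)) ^ a ≤ Real.exp z ^ a :=
      Real.rpow_le_rpow (by positivity) h1 ha.le
    have h3 : Real.exp z ^ a = Real.exp (a * z) := by
      rw [mul_comm, Real.exp_mul]
    have h4 : (z ^ n / (n.factorial : ℝ)) ^ a = 2 ^ n * x ^ n / (n.factorial : ℝ) ^ a := by
      rw [Real.div_rpow (by positivity) hfac.le]
      congr 1
      rw [← Real.rpow_natCast z n, ← Real.rpow_mul h2x.le, ← Real.rpow_mul h2x.le]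
      have : 1 / a * (n : ℝ) * a = (n : ℝ) := by field_simp
      rw [this, Real.rpow_natCast, mul_pow]
    rw [h4, h3] at h2
    have h5 : x ^ n / (n.factorial : ℝ) ^ a
        = (1/2 : ℝ) ^ n * (2 ^ n * x ^ n / (n.factorial : ℝ) ^ a) := by
      field_simp
      rw [← mul_pow]; norm_num
    rw [h5]
    exact mul_le_mul_of_nonneg_left h2 (by positivity)
  have hsumm : Summable (fun n : ℕ => (1/2 : ℝ) ^ n * Real.exp (a * z)) :=
    (summable_geometric_of_lt_one (by norm_num) (by norm_num)).mul_right _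
  have hsum1 : Summable (fun n : ℕ => x ^ n / (n.factorial : ℝ) ^ a) :=
    Summable.of_nonneg_of_le (fun n => by positivity) key hsumm
  calc ∑' n : ℕ, x ^ n / (n.factorial : ℝ) ^ a
      ≤ ∑' n : ℕ, (1/2 : ℝ) ^ n * Real.exp (a * z) := Summable.tsum_le_tsum key hsum1 hsumm
    _ = (∑' n : ℕ, (1/2 : ℝ) ^ n) * Real.exp (a * z) := tsum_mul_right
    _ = 2 * Real.exp (a * z) := by
        rw [tsum_geometric_of_lt_one (by norm_num) (by norm_num)]; norm_num
    _ = 2 * Real.exp (a * 2 ^ (1 / a) * x ^ (1 / a)) := by rw [hza]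
end

section
/- Let μ(dξ) = c_H |ξ|^{1-2H} dξ on ℝ with 1/4 < H < 1/2 and c_H > 0 a constant. For every ε > 0 there exists C(ε) > 0 such that for all R > 0, ∫_ℝ ℓ_R(ξ) μ(dξ) ≤ ε + C(ε)/R, where ℓ_R(ξ) = sin²(Rξ)/(π R ξ²). -/
open Real MeasureTheory Set

lemma aux_rough (p cH R : ℝ) (hp0 : 0 < p) (hp1 : p < 1) (hcH : 0 < cH) (hR : 0 < R) :
    ∫ ξ : ℝ, Real.sin (R * ξ) ^ 2 / (Real.pi * R * ξ ^ 2) * (cH * |ξ| ^ p)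
      ≤ (2 * cH / Real.pi * (1 + 1 / (1 - p))) * R ^ (-p) := by
  have hπ := Real.pi_pos
  set s : ℝ := R⁻¹ with hs_def
  have hs : 0 < s := inv_pos.mpr hR
  set q : ℝ := p - 2 with hq_def
  have hq : q < -1 := by rw [hq_def]; linarith
  set c₁ : ℝ := cH * R ^ (1 - p) / Real.pi with hc₁_def
  set c₂ : ℝ := cH / (Real.pi * R) with hc₂_def
  have hRp : (0:ℝ) < R ^ (1 - p) := Real.rpow_pos_of_pos hR _
  have hc₁ : 0 < c₁ := by rw [hc₁_def]; positivity
  have hc₂ : 0 < c₂ := by rw [hc₂_def]; positivity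
  set f : ℝ → ℝ := fun ξ => Real.sin (R * ξ) ^ 2 / (Real.pi * R * ξ ^ 2) * (cH * |ξ| ^ p)
    with hf_def
  set h₂ : ℝ → ℝ := fun ξ => c₂ * |ξ| ^ q with hh₂
  set g : ℝ → ℝ := fun ξ =>
    (Icc (-s) s).indicator (fun _ => c₁) ξ + (Iic (-s) ∪ Ioi s).indicator h₂ ξ with hg_def
  have hA : MeasurableSet (Icc (-s) s) := measurableSet_Icc
  have hB : MeasurableSet (Iic (-s) ∪ Ioi s) := measurableSet_Iic.union measurableSet_Ioi
  -- integrability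
  have base : IntegrableOn (fun x : ℝ => c₂ * x ^ q) (Ioi s) :=
    (integrableOn_Ioi_rpow_of_lt hq hs).const_mul c₂
  have hIoi : IntegrableOn h₂ (Ioi s) :=
    base.congr_fun (fun x hx => by
      simp only [hh₂]; rw [abs_of_pos (hs.trans hx)]) measurableSet_Ioi
  have hIic : IntegrableOn h₂ (Iic (-s)) := by
    have h_map_neg : (volume.restrict (Ici s)).map Neg.neg = volume.restrict (Iic (-s)) := by
      conv => rhs; rw [← Measure.map_neg_eq_self (volume : Measure ℝ),
        measurableEmbedding_neg.restrict_map]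
      simp
    rw [IntegrableOn, ← h_map_neg, measurableEmbedding_neg.integrable_map_iff]
    have heq : h₂ ∘ Neg.neg = h₂ := by
      funext x; simp [hh₂, abs_neg]
    rw [heq]
    exact (integrableOn_Ici_iff_integrableOn_Ioi).mpr hIoi
  have hint1 : Integrable ((Icc (-s) s).indicator fun _ => c₁) :=
    (integrable_indicator_iff hA).mpr (integrableOn_const measure_Icc_lt_top.ne)
  have hintB : IntegrableOn h₂ (Iic (-s) ∪ Ioi s) := hIic.union hIoi
  have hint2 : Integrable ((Iic (-s) ∪ Ioi s).indicator h₂) :=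
    (integrable_indicator_iff hB).mpr hintB
  have hg_int : Integrable g := hint1.add hint2
  -- pointwise bounds
  have hf0 : ∀ ξ, 0 ≤ f ξ := by
    intro ξ
    rw [hf_def]
    have h1 : 0 ≤ Real.sin (R * ξ) ^ 2 / (Real.pi * R * ξ ^ 2) := by positivity
    have h2 : 0 ≤ cH * |ξ| ^ p := by positivity
    exact mul_nonneg h1 h2
  have hfg : ∀ ξ, f ξ ≤ g ξ := by
    intro ξ
    rcases le_or_gt |ξ| s with hle | hgt
    · have hmem : ξ ∈ Icc (-s) s := by
        rcases abs_le.mp hle with ⟨h1, h2⟩; exact ⟨h1, h2⟩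
      have h2nn : 0 ≤ (Iic (-s) ∪ Ioi s).indicator h₂ ξ := by
        apply Set.indicator_nonneg
        intro x _
        simp only [hh₂]; positivity
      have : f ξ ≤ c₁ := by
        rcases eq_or_ne ξ 0 with rfl | hξ
        · simp [hf_def]
          positivity
        · have hξ2 : (0:ℝ) < ξ ^ 2 := by positivity
          have hsin : Real.sin (R * ξ) ^ 2 ≤ (R * ξ) ^ 2 := Real.sin_sq_le_sq
          have step1 : f ξ ≤ (R * ξ) ^ 2 / (Real.pi * R * ξ ^ 2) * (cH * |ξ| ^ p) := by
            rw [hf_def]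
            apply mul_le_mul_of_nonneg_right _ (by positivity)
            exact div_le_div_of_nonneg_right hsin (by positivity) |>.trans_eq rfl
          have step2 : (R * ξ) ^ 2 / (Real.pi * R * ξ ^ 2) = R / Real.pi := by
            field_simp
          rw [step2] at step1
          have habsp : |ξ| ^ p ≤ s ^ p := Real.rpow_le_rpow (abs_nonneg _) hle hp0.le
          have step3 : R / Real.pi * (cH * |ξ| ^ p) ≤ R / Real.pi * (cH * s ^ p) :=
            mul_le_mul_of_nonneg_left (mul_le_mul_of_nonneg_left habsp hcH.le) (by positivity)
          have step4 : R / Real.pi * (cH * s ^ p) = c₁ := by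
            rw [hc₁_def, hs_def]
            rw [Real.inv_rpow hR.le, show (1:ℝ) - p = -p + 1 by ring,
              Real.rpow_add_one hR.ne', Real.rpow_neg hR.le]
            field_simp
          linarith
      calc f ξ ≤ c₁ := this
        _ = (Icc (-s) s).indicator (fun _ => c₁) ξ := by rw [Set.indicator_of_mem hmem]
        _ ≤ g ξ := by rw [hg_def]; simp only []; linarith [h2nn]
    · have hξ : ξ ≠ 0 := by
        intro h; rw [h] at hgt; simp at hgt; linarith
      have hmem : ξ ∈ Iic (-s) ∪ Ioi s := by
        rcases lt_abs.mp hgt with h | h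
        · right; exact h
        · left; simp only [mem_Iic]; linarith
      have h1nn : 0 ≤ (Icc (-s) s).indicator (fun _ : ℝ => c₁) ξ :=
        Set.indicator_nonneg (fun _ _ => hc₁.le) ξ
      have habs : (0:ℝ) < |ξ| := abs_pos.mpr hξ
      have hξ2 : (0:ℝ) < ξ ^ 2 := by positivity
      have hsin : Real.sin (R * ξ) ^ 2 ≤ 1 := Real.sin_sq_le_one _
      have step1 : f ξ ≤ 1 / (Real.pi * R * ξ ^ 2) * (cH * |ξ| ^ p) := by
        rw [hf_def]
        apply mul_le_mul_of_nonneg_right _ (by positivity)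
        exact div_le_div_of_nonneg_right hsin (by positivity)
      have step2 : 1 / (Real.pi * R * ξ ^ 2) * (cH * |ξ| ^ p) = h₂ ξ := by
        simp only [hh₂, hc₂_def, hq_def]
        rw [Real.rpow_sub habs, show |ξ| ^ (2:ℝ) = ξ ^ 2 by
          rw [show (2:ℝ) = ((2:ℕ):ℝ) by norm_num, Real.rpow_natCast, sq_abs]]
        field_simp
      have : f ξ ≤ h₂ ξ := step2 ▸ step1
      calc f ξ ≤ h₂ ξ := this
        _ = (Iic (-s) ∪ Ioi s).indicator h₂ ξ := by rw [Set.indicator_of_mem hmem]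
        _ ≤ g ξ := by rw [hg_def]; simp only []; linarith [h1nn]
  have key : ∫ ξ, f ξ ≤ ∫ ξ, g ξ :=
    integral_mono_of_nonneg (Filter.Eventually.of_forall hf0) hg_int
      (Filter.Eventually.of_forall hfg)
  -- compute ∫ g
  have hvol : (volume (Icc (-s) s)).toReal = 2 * s := by
    rw [Real.volume_Icc, ENNReal.toReal_ofReal (by linarith)]
    ring
  have hIoi_val : ∫ x in Ioi s, h₂ x = c₂ * (-s ^ (q + 1) / (q + 1)) := by
    have : ∫ x in Ioi s, h₂ x = ∫ x in Ioi s, c₂ * x ^ q := by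
      refine setIntegral_congr_fun measurableSet_Ioi (fun x hx => ?_)
      simp only [hh₂]; rw [abs_of_pos (hs.trans hx)]
    rw [this, MeasureTheory.integral_const_mul, integral_Ioi_rpow_of_lt hq hs]
  have hIic_val : ∫ x in Iic (-s), h₂ x = c₂ * (-s ^ (q + 1) / (q + 1)) := by
    have := integral_comp_neg_Ioi s h₂
    have heq : ∀ x : ℝ, h₂ (-x) = h₂ x := by intro x; simp [hh₂, abs_neg]
    simp_rw [heq] at this
    rw [← this, hIoi_val]
  have hg_val : ∫ ξ, g ξ = c₁ * (2 * s) + 2 * (c₂ * (-s ^ (q + 1) / (q + 1))) := by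
    rw [hg_def]
    rw [integral_add hint1 hint2]
    rw [integral_indicator_const _ hA, integral_indicator hB]
    rw [setIntegral_union (Iic_disjoint_Ioi (by linarith)) measurableSet_Ioi hIic hIoi]
    rw [hIic_val, hIoi_val, measureReal_def, hvol, smul_eq_mul]
    ring
  -- algebra
  have e1 : R ^ (1 - p) = R ^ (-p) * R := by
    rw [show (1:ℝ) - p = -p + 1 by ring, Real.rpow_add_one hR.ne']
  have e2 : s ^ (q + 1) = R ^ (-p) * R := by
    rw [hs_def, hq_def, Real.inv_rpow hR.le, ← Real.rpow_neg hR.le]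
    rw [show -(p - 2 + 1) = -p + 1 by ring, Real.rpow_add_one hR.ne']
  have hq1 : q + 1 ≠ 0 := by rw [hq_def]; intro h; linarith [hp1]
  have h1p : (1:ℝ) - p ≠ 0 := by intro h; linarith
  have halg : c₁ * (2 * s) + 2 * (c₂ * (-s ^ (q + 1) / (q + 1)))
      = (2 * cH / Real.pi * (1 + 1 / (1 - p))) * R ^ (-p) := by
    rw [hc₁_def, hc₂_def, e1, e2, hs_def, hq_def, show p - 2 + 1 = -(1-p) by ring,
      neg_div_neg_eq]
    have hne : p * R * Real.pi - R * Real.pi ≠ 0 := by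
      have : p * R * Real.pi - R * Real.pi = -((1 - p) * (R * Real.pi)) := by ring
      rw [this]
      simp only [neg_ne_zero]
      exact mul_ne_zero h1p (by positivity)
    field_simp [hne]
  rw [hf_def] at key
  exact key.trans (le_of_eq (hg_val.trans halg))

open Real MeasureTheory

theorem stmt_9 (H : ℝ) (hH1 : 1 / 4 < H) (hH2 : H < 1 / 2) (cH : ℝ) (hcH : 0 < cH)
    (ε : ℝ) (hε : 0 < ε) :
    ∃ C : ℝ, 0 < C ∧ ∀ R : ℝ, 0 < R →
      ∫ ξ : ℝ, Real.sin (R * ξ) ^ 2 / (Real.pi * R * ξ ^ 2) * (cH * |ξ| ^ (1 - 2 * H))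
        ≤ ε + C / R := by
  have hπ := Real.pi_pos
  set p : ℝ := 1 - 2 * H with hp_def
  have hp0 : 0 < p := by rw [hp_def]; linarith
  have hp1 : p < 1 := by rw [hp_def]; linarith
  set K : ℝ := 2 * cH / Real.pi * (1 + 1 / (1 - p)) with hK_def
  have h1p : (0:ℝ) < 1 - p := by linarith
  have hK : 0 < K := by
    have h1 : (0:ℝ) < 1 + 1 / (1 - p) := by
      have := one_div_pos.mpr h1p
      linarith
    have h2 : (0:ℝ) < 2 * cH / Real.pi := by positivity
    exact mul_pos h2 h1
  set R₀ : ℝ := (K / ε) ^ (1 / p) with hR₀_def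
  have hR₀ : 0 < R₀ := Real.rpow_pos_of_pos (by positivity) _
  refine ⟨max 1 (K * R₀ ^ (1 - p)), lt_of_lt_of_le one_pos (le_max_left _ _), fun R hR => ?_⟩
  set C : ℝ := max 1 (K * R₀ ^ (1 - p))
  have hC : 0 < C := lt_of_lt_of_le one_pos (le_max_left _ _)
  have hbound := aux_rough p cH R hp0 hp1 hcH hR
  rw [← hK_def] at hbound
  refine hbound.trans ?_
  by_cases hcase : K * R ^ (-p) ≤ ε
  · have : (0:ℝ) < C / R := by positivity
    linarith
  · push_neg at hcase
    have hRp : (0:ℝ) < R ^ p := Real.rpow_pos_of_pos hR _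
    have hRK : R ^ p < K / ε := by
      rw [lt_div_iff₀ hε]
      have hRnegp : R ^ (-p) = (R ^ p)⁻¹ := by
        rw [Real.rpow_neg hR.le]
      rw [hRnegp] at hcase
      calc R ^ p * ε = ε * R ^ p := by ring
        _ < K * (R ^ p)⁻¹ * R ^ p := by
            exact mul_lt_mul_of_pos_right hcase hRp
        _ = K := by field_simp
    have hRR₀ : R < R₀ := by
      have h1 : R = (R ^ p) ^ (1 / p) := by
        rw [← Real.rpow_mul hR.le, mul_one_div, div_self hp0.ne', Real.rpow_one]
      rw [hR₀_def, h1]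
      exact Real.rpow_lt_rpow hRp.le hRK (by positivity)
    have e1 : R ^ (-p) = R ^ (1 - p) / R := by
      rw [show (1:ℝ) - p = -p + 1 by ring, Real.rpow_add_one hR.ne']
      field_simp
    have h2 : R ^ (1 - p) ≤ R₀ ^ (1 - p) :=
      Real.rpow_le_rpow hR.le hRR₀.le h1p.le
    have h3 : K * R ^ (-p) ≤ K * R₀ ^ (1 - p) / R := by
      rw [e1, ← mul_div_assoc]
      exact div_le_div_of_nonneg_right (mul_le_mul_of_nonneg_left h2 hK.le) hR.le
    have h4 : K * R₀ ^ (1 - p) / R ≤ C / R :=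
      div_le_div_of_nonneg_right (le_max_right _ _) hR.le
    linarith
end

section
/- Let μ be a measure on ℝ^d satisfying Dalang's condition ∫(1+|ξ|²)^{-1} μ(dξ) < ∞, and for t > 0 and n ≥ 1 define h_n(t) = ∫_{T_n(t)} ∫_{(ℝ^d)ⁿ} ∏_{j=1}^{n} e^{-(t_{j+1}-t_j)|ξ_j|²} μ(dξ₁)…μ(dξ_n) dt₁…dt_n, with t_{n+1} = t and h_0(t)=1. Then for any t > 0 and γ > 0, the series ∑_{n≥0} γⁿ h_n(t) converges. -/
open MeasureTheory

/-- The simplex integral `h_n(t)` from Lemma 3.8 of Balan–Chen, with `t_{n+1} = t`. -/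
noncomputable def hSeq (d n : ℕ) (μ : Measure (EuclideanSpace ℝ (Fin d))) (t : ℝ) : ENNReal :=
  if n = 0 then 1 else
  ∫⁻ p in {p : Fin n → ℝ | StrictMono p ∧ ∀ i, 0 < p i ∧ p i < t},
    ∫⁻ ξ : Fin n → EuclideanSpace ℝ (Fin d),
      ENNReal.ofReal (∏ j : Fin n,
        Real.exp (-((if h : (j : ℕ) + 1 < n then p ⟨(j : ℕ) + 1, h⟩ else t) - p j) * ‖ξ j‖ ^ 2))
      ∂(Measure.pi fun _ => μ)

section BalanChenAux

open Real Set Filter Matrix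
open scoped ENNReal Topology

variable {d : ℕ}
local notation "E" => EuclideanSpace ℝ (Fin d)

lemma lintegral_pi_prod {α : Type*} [MeasurableSpace α] (μ : Measure α) [SigmaFinite μ] :
    ∀ {n : ℕ} (f : Fin n → α → ℝ≥0∞), (∀ i, Measurable (f i)) →
    ∫⁻ x : Fin n → α, ∏ i, f i (x i) ∂(Measure.pi fun _ => μ) = ∏ i, ∫⁻ y, f i y ∂μ := by
  intro n
  induction n with
  | zero => intro f _; simp [Measure.pi_empty_univ]
  | succ n ih =>
    intro f hf
    have mp := (measurePreserving_piFinSuccAbove (fun _ : Fin (n+1) => μ) 0).symm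
    have hmeas : Measurable fun x : Fin (n+1) → α => ∏ i, f i (x i) :=
      Finset.measurable_prod _ fun i _ => (hf i).comp (measurable_pi_apply i)
    rw [← mp.lintegral_comp hmeas]
    have key : ∀ y : α × (Fin n → α),
        (∏ i, f i (((MeasurableEquiv.piFinSuccAbove (fun _ : Fin (n+1) => α) 0).symm y) i))
        = f 0 y.1 * ∏ j : Fin n, f (Fin.succ j) (y.2 j) := by
      intro y
      simp_rw [MeasurableEquiv.piFinSuccAbove_symm_apply, Fin.insertNthEquiv,
        Fin.prod_univ_succ, Fin.insertNth_zero]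
      simp [Fin.zero_succAbove, Function.comp_def]
    simp_rw [key]
    rw [lintegral_prod_mul (f := f 0) (g := fun x : Fin n → α => ∏ j : Fin n, f (Fin.succ j) (x j))
      (hf 0).aemeasurable
      (Finset.measurable_prod _ fun j _ =>
        ((hf (Fin.succ j)).comp (measurable_pi_apply j))).aemeasurable]
    rw [ih _ (fun j => hf (Fin.succ j)), Fin.prod_univ_succ]

lemma sf_of_dalang {α : Type*} [NormedAddCommGroup α] [MeasurableSpace α] [BorelSpace α]
    (μ : Measure α) (hD : ∫⁻ ξ, ENNReal.ofReal ((1 + ‖ξ‖ ^ 2)⁻¹) ∂μ < ⊤) :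
    SigmaFinite μ := by
  refine ⟨⟨⟨fun k => {ξ : α | ‖ξ‖ ≤ k}, fun _ => trivial, fun k => ?_, ?_⟩⟩⟩
  · have hb : ∀ ξ ∈ {ξ : α | ‖ξ‖ ≤ k}, (1:ℝ≥0∞) ≤
        ENNReal.ofReal (1 + (k:ℝ) ^ 2) * ENNReal.ofReal ((1 + ‖ξ‖ ^ 2)⁻¹) := by
      intro ξ hξ
      rw [← ENNReal.ofReal_mul (by positivity), ← ENNReal.ofReal_one]
      apply ENNReal.ofReal_le_ofReal
      rw [← div_eq_mul_inv, le_div_iff₀ (by positivity)]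
      simp only [Set.mem_setOf_eq] at hξ
      nlinarith [norm_nonneg ξ]
    have hmeas : MeasurableSet {ξ : α | ‖ξ‖ ≤ k} :=
      measurableSet_le (by fun_prop) measurable_const
    calc μ {ξ : α | ‖ξ‖ ≤ k} = ∫⁻ ξ in {ξ : α | ‖ξ‖ ≤ k}, 1 ∂μ := by simp
      _ ≤ ∫⁻ ξ in {ξ : α | ‖ξ‖ ≤ k},
          ENNReal.ofReal (1 + (k:ℝ) ^ 2) * ENNReal.ofReal ((1 + ‖ξ‖ ^ 2)⁻¹) ∂μ := by
          refine setLIntegral_mono (by fun_prop) hb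
      _ ≤ ENNReal.ofReal (1 + (k:ℝ) ^ 2) * ∫⁻ ξ, ENNReal.ofReal ((1 + ‖ξ‖ ^ 2)⁻¹) ∂μ := by
          rw [lintegral_const_mul _ (by fun_prop)]
          exact mul_le_mul_right (setLIntegral_le_lintegral _ _) _
      _ < ⊤ := ENNReal.mul_lt_top ENNReal.ofReal_lt_top hD
  · apply eq_univ_of_forall
    intro ξ
    obtain ⟨k, hk⟩ := exists_nat_ge ‖ξ‖
    exact mem_iUnion.2 ⟨k, hk⟩

lemma gap_mp (n : ℕ) (t : ℝ) :
    MeasurePreserving (fun (p : Fin n → ℝ) (j : Fin n) =>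
      (if h : (j:ℕ)+1 < n then p ⟨(j:ℕ)+1, h⟩ else t) - p j)
      (volume : Measure (Fin n → ℝ)) volume := by
  classical
  set A : Matrix (Fin n) (Fin n) ℝ :=
    Matrix.of fun j i => if i = j then -1 else if (i:ℕ) = (j:ℕ)+1 then 1 else 0 with hA
  have hmul : ∀ (p : Fin n → ℝ) (j : Fin n),
      A.mulVec p j = (if h : (j:ℕ)+1 < n then p ⟨(j:ℕ)+1, h⟩ else 0) - p j := by
    intro p j
    have hsplit : ∀ i : Fin n, A j i * p i =
        (if i = j then -p i else 0) + (if (i:ℕ) = (j:ℕ)+1 then p i else 0) := by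
      intro i
      by_cases h1 : i = j
      · subst h1
        simp [hA, Nat.succ_ne_self, (Nat.succ_ne_self (i:ℕ)).symm]
      · by_cases h2 : (i:ℕ) = (j:ℕ)+1 <;> simp [hA, h1, h2]
    rw [Matrix.mulVec, dotProduct]
    simp_rw [hsplit]
    rw [Finset.sum_add_distrib, Finset.sum_ite_eq' Finset.univ j (fun i => -p i)]
    by_cases h : (j:ℕ)+1 < n
    · have : ∀ i : Fin n, ((i:ℕ) = (j:ℕ)+1) ↔ i = ⟨(j:ℕ)+1, h⟩ := by
        intro i; rw [Fin.ext_iff]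
      simp_rw [this]
      rw [Finset.sum_ite_eq' Finset.univ (⟨(j:ℕ)+1, h⟩ : Fin n) p]
      simp [h, sub_eq_add_neg, add_comm]
    · have : ∀ i : Fin n, ¬((i:ℕ) = (j:ℕ)+1) := by
        intro i hi; exact h (hi ▸ i.isLt)
      simp [this, h, sub_eq_add_neg, add_comm]
  have hdet : A.det = (-1)^n := by
    have htri : A.BlockTriangular id := by
      intro i j hij
      simp only [id_eq] at hij
      have h1 : ¬ (j = i) := fun h => absurd (h ▸ hij) (lt_irrefl _)
      have h2 : ¬ ((j:ℕ) = (i:ℕ)+1) := by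
        have := (Fin.lt_def).mp hij; omega
      simp only [hA, Matrix.of_apply, if_neg h1, if_neg h2]
    rw [Matrix.det_of_upperTriangular htri]
    simp [hA]
  have hdet0 : A.det ≠ 0 := by rw [hdet]; simp [pow_ne_zero]
  have hmap : Measure.map (Matrix.toLin' A) volume = volume := by
    rw [Real.map_matrix_volume_pi_eq_smul_volume_pi hdet0, hdet]
    have h1 : |((-1:ℝ)^n)⁻¹| = 1 := by
      rw [abs_inv, abs_pow, abs_neg, abs_one, one_pow, inv_one]
    rw [h1]
    simp
  have hfun : (fun p : Fin n → ℝ => A.mulVec p) = ⇑(Matrix.toLin' A) :=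
    funext fun p => (Matrix.toLin'_apply A p).symm
  have mp1 : MeasurePreserving (fun p : Fin n → ℝ => A.mulVec p) volume volume := by
    rw [hfun]
    exact ⟨(LinearMap.continuous_on_pi (Matrix.toLin' A)).measurable, hmap⟩
  set c : Fin n → ℝ := fun j => if (j:ℕ)+1 < n then 0 else t with hc
  have mp2 : MeasurePreserving (fun v : Fin n → ℝ => v + c) volume volume :=
    measurePreserving_add_right volume c
  have hL : (fun (p : Fin n → ℝ) (j : Fin n) =>
      (if h : (j:ℕ)+1 < n then p ⟨(j:ℕ)+1, h⟩ else t) - p j)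
      = (fun v : Fin n → ℝ => v + c) ∘ (fun p : Fin n → ℝ => A.mulVec p) := by
    funext p j
    simp only [Function.comp_apply, Pi.add_apply, hmul, hc]
    by_cases h : (j:ℕ)+1 < n <;> simp [h] <;> ring
  rw [hL]
  exact mp2.comp mp1

lemma simplex_meas (n : ℕ) (t : ℝ) :
    MeasurableSet {p : Fin n → ℝ | StrictMono p ∧ ∀ i, 0 < p i ∧ p i < t} := by
  have h1 : MeasurableSet {p : Fin n → ℝ | StrictMono p} := by
    have : {p : Fin n → ℝ | StrictMono p} = ⋂ (i : Fin n) (j : Fin n) (_ : i < j),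
        {p : Fin n → ℝ | p i < p j} := by
      ext p
      simp only [mem_setOf_eq, mem_iInter]
      exact ⟨fun h i j hij => h hij, fun h a b hab => h a b hab⟩
    rw [this]
    exact MeasurableSet.iInter fun i => MeasurableSet.iInter fun j =>
      MeasurableSet.iInter fun _ =>
        measurableSet_lt (measurable_pi_apply i) (measurable_pi_apply j)
  have h2 : MeasurableSet {p : Fin n → ℝ | ∀ i, 0 < p i ∧ p i < t} := by
    have : {p : Fin n → ℝ | ∀ i, 0 < p i ∧ p i < t} = ⋂ (i : Fin n),
        ({p : Fin n → ℝ | 0 < p i} ∩ {p : Fin n → ℝ | p i < t}) := by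
      ext p; simp [mem_iInter, forall_and]
    rw [this]
    exact MeasurableSet.iInter fun i => (measurableSet_lt measurable_const
      (measurable_pi_apply i)).inter (measurableSet_lt (measurable_pi_apply i) measurable_const)
  exact h1.inter h2

lemma simplex_bound (n : ℕ) (t : ℝ) (k : ℝ → ℝ≥0∞) (hk : Measurable k) :
    ∫⁻ p in {p : Fin n → ℝ | StrictMono p ∧ ∀ i, 0 < p i ∧ p i < t},
      ∏ j : Fin n, k ((if h : (j:ℕ)+1 < n then p ⟨(j:ℕ)+1, h⟩ else t) - p j)
    ≤ (∫⁻ s in Ioi (0:ℝ), k s) ^ n := by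
  set T := {p : Fin n → ℝ | StrictMono p ∧ ∀ i, 0 < p i ∧ p i < t} with hT
  set L := fun (p : Fin n → ℝ) (j : Fin n) =>
      (if h : (j:ℕ)+1 < n then p ⟨(j:ℕ)+1, h⟩ else t) - p j with hLdef
  set g : (Fin n → ℝ) → ℝ≥0∞ := fun w => ∏ j : Fin n, (Ioi (0:ℝ)).indicator k (w j) with hg
  have hgm : Measurable g :=
    Finset.measurable_prod _ fun j _ =>
      (hk.indicator measurableSet_Ioi).comp (measurable_pi_apply j)
  have step1 : ∫⁻ p in T, ∏ j : Fin n, k (L p j) ≤ ∫⁻ p, g (L p) := by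
    rw [← lintegral_indicator (simplex_meas n t)]
    apply lintegral_mono
    intro p
    by_cases hp : p ∈ T
    · rw [indicator_of_mem hp]
      apply le_of_eq
      apply Finset.prod_congr rfl
      intro j _
      rw [indicator_of_mem]
      rw [mem_Ioi, hLdef]
      obtain ⟨hmono, hbdd⟩ := hp
      by_cases h : (j:ℕ)+1 < n
      · simp only [h, dif_pos]
        have : j < (⟨(j:ℕ)+1, h⟩ : Fin n) := by rw [Fin.lt_def]; simp
        linarith [hmono this]
      · simp only [h, dif_neg, not_false_iff]
        linarith [(hbdd j).2]
    · rw [indicator_of_notMem hp]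
      exact zero_le
  have step2 : ∫⁻ p, g (L p) = ∫⁻ w, g w := (gap_mp n t).lintegral_comp hgm
  have step3 : ∫⁻ w, g w = (∫⁻ s in Ioi (0:ℝ), k s) ^ n := by
    rw [hg, volume_pi,
      lintegral_pi_prod volume (fun _ => (Ioi (0:ℝ)).indicator k)
        (fun _ => hk.indicator measurableSet_Ioi)]
    rw [lintegral_indicator measurableSet_Ioi]
    simp [Finset.prod_const]
  calc ∫⁻ p in T, ∏ j : Fin n, k (L p j) ≤ ∫⁻ p, g (L p) := step1
    _ = (∫⁻ s in Ioi (0:ℝ), k s) ^ n := by rw [step2, step3]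

noncomputable def kb (μ : Measure (EuclideanSpace ℝ (Fin d))) (β : ℝ) (s : ℝ) : ℝ≥0∞ :=
  ∫⁻ ξ : EuclideanSpace ℝ (Fin d), ENNReal.ofReal (Real.exp (-(s * (β + ‖ξ‖^2)))) ∂μ

noncomputable def gb (μ : Measure (EuclideanSpace ℝ (Fin d))) (β : ℝ) : ℝ≥0∞ :=
  ∫⁻ ξ : EuclideanSpace ℝ (Fin d), ENNReal.ofReal ((β + ‖ξ‖^2)⁻¹) ∂μ

lemma kb_meas (μ : Measure (EuclideanSpace ℝ (Fin d))) [SigmaFinite μ] (β : ℝ) :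
    Measurable (kb μ β) := by
  apply Measurable.lintegral_prod_right (f := fun (s : ℝ) (ξ : E) =>
    ENNReal.ofReal (Real.exp (-(s * (β + ‖ξ‖^2)))))
  apply ENNReal.measurable_ofReal.comp
  apply Continuous.measurable
  continuity

lemma lint_exp (a : ℝ) (ha : 0 < a) :
    ∫⁻ s in Ioi (0:ℝ), ENNReal.ofReal (Real.exp (-(s * a))) = ENNReal.ofReal a⁻¹ := by
  have hint : IntegrableOn (fun s : ℝ => Real.exp (-(a * s))) (Ioi 0) := by
    simpa using exp_neg_integrableOn_Ioi 0 ha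
  have : ∫ s in Ioi (0:ℝ), Real.exp (-(a * s)) = a⁻¹ := by
    have := integral_comp_mul_left_Ioi (fun x => Real.exp (-x)) 0 ha
    simp only [mul_zero, integral_exp_neg_Ioi, neg_zero, Real.exp_zero, smul_eq_mul,
      mul_one] at this
    rw [this]
  rw [← ofReal_integral_eq_lintegral_ofReal]
  · simp_rw [mul_comm]
    rw [this]
  · simpa [mul_comm, IntegrableOn] using hint
  · filter_upwards with s using (Real.exp_pos _).le

lemma kb_int (μ : Measure (EuclideanSpace ℝ (Fin d))) [SigmaFinite μ] (β : ℝ) (hβ : 0 < β) :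
    ∫⁻ s in Ioi (0:ℝ), kb μ β s = gb μ β := by
  have hswap : ∫⁻ s in Ioi (0:ℝ), kb μ β s =
      ∫⁻ ξ : E, (∫⁻ s in Ioi (0:ℝ), ENNReal.ofReal (Real.exp (-(s * (β + ‖ξ‖^2))))) ∂μ := by
    simp only [kb]
    refine lintegral_lintegral_swap (μ := volume.restrict (Ioi (0:ℝ))) (ν := μ)
      (f := fun (s : ℝ) (ξ : E) => ENNReal.ofReal (Real.exp (-(s * (β + ‖ξ‖^2))))) ?_
    apply Measurable.aemeasurable
    apply ENNReal.measurable_ofReal.comp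
    apply Continuous.measurable
    continuity
  rw [hswap, gb]
  apply lintegral_congr
  intro ξ
  exact lint_exp (β + ‖ξ‖^2) (by positivity)

lemma gb_tendsto (μ : Measure (EuclideanSpace ℝ (Fin d)))
    (hD : ∫⁻ ξ, ENNReal.ofReal ((1 + ‖ξ‖ ^ 2)⁻¹) ∂μ < ⊤) :
    Tendsto (fun m : ℕ => gb μ (1 + m)) atTop (𝓝 0) := by
  have h0 : (0:ℝ≥0∞) = ∫⁻ ξ : E, (0:ℝ≥0∞) ∂μ := by simp
  rw [h0]
  simp only [gb]
  apply tendsto_lintegral_of_dominated_convergence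
    (bound := fun ξ : E => ENNReal.ofReal ((1 + ‖ξ‖ ^ 2)⁻¹))
  · intro m
    apply ENNReal.measurable_ofReal.comp
    apply Measurable.inv
    apply Continuous.measurable
    continuity
  · intro m
    filter_upwards with ξ
    apply ENNReal.ofReal_le_ofReal
    apply inv_anti₀ (by positivity)
    have : (0:ℝ) ≤ m := Nat.cast_nonneg m
    linarith
  · exact hD.ne
  · filter_upwards with ξ
    rw [show (0:ℝ≥0∞) = ENNReal.ofReal 0 by simp]
    apply ENNReal.tendsto_ofReal
    have h1 : Tendsto (fun m : ℕ => 1 + (m:ℝ) + ‖ξ‖^2) atTop atTop := by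
      apply tendsto_atTop_add_const_right
      apply tendsto_atTop_add_const_left
      exact tendsto_natCast_atTop_atTop
    exact h1.inv_tendsto_atTop

lemma hSeq_bound (μ : Measure (EuclideanSpace ℝ (Fin d))) [SigmaFinite μ]
    (t β : ℝ) (ht : 0 < t) (hβ : 0 < β) (n : ℕ) :
    hSeq d n μ t ≤ ENNReal.ofReal (Real.exp (β * t)) * (gb μ β) ^ n := by
  rcases Nat.eq_zero_or_pos n with hn | hn
  · subst hn
    simp only [hSeq, if_pos rfl, pow_zero, mul_one]
    exact ENNReal.one_le_ofReal.2 (Real.one_le_exp (by positivity))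
  rw [hSeq, if_neg hn.ne']
  set T := {p : Fin n → ℝ | StrictMono p ∧ ∀ i, 0 < p i ∧ p i < t} with hT
  set Δ : (Fin n → ℝ) → Fin n → ℝ :=
    fun p j => (if h : (j:ℕ)+1 < n then p ⟨(j:ℕ)+1, h⟩ else t) - p j with hΔ
  -- measurability of each gap
  have hΔm : ∀ j : Fin n, Measurable fun p : Fin n → ℝ => Δ p j := by
    intro j
    by_cases h : (j:ℕ)+1 < n
    · simp only [hΔ, dif_pos h]
      exact (measurable_pi_apply _).sub (measurable_pi_apply _)
    · simp only [hΔ, dif_neg h]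
      exact measurable_const.sub (measurable_pi_apply _)
  -- sum of gaps
  have hsum : ∀ p ∈ T, ∑ j : Fin n, Δ p j ≤ t := by
    intro p hp
    set f : ℕ → ℝ := fun i => if h : i < n then p ⟨i, h⟩ else t with hf
    have hgap : ∀ j : Fin n, Δ p j = f ((j:ℕ)+1) - f (j:ℕ) := by
      intro j
      have hj : (j:ℕ) < n := j.isLt
      simp only [hΔ, hf, dif_pos hj]
    have : ∑ j : Fin n, Δ p j = f n - f 0 := by
      rw [Finset.sum_congr rfl fun j _ => hgap j]
      rw [Fin.sum_univ_eq_sum_range (fun i => f (i+1) - f i) n]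
      exact Finset.sum_range_sub f n
    rw [this]
    have hfn : f n = t := by simp [hf]
    have hf0 : f 0 = p ⟨0, hn⟩ := by simp [hf, hn]
    rw [hfn, hf0]
    have := (hp.2 ⟨0, hn⟩).1
    linarith
  -- pointwise real bound
  have hpt : ∀ p ∈ T, ∀ ξ : Fin n → E,
      ENNReal.ofReal (∏ j : Fin n, Real.exp (-(Δ p j) * ‖ξ j‖ ^ 2)) ≤
      ENNReal.ofReal (Real.exp (β * t)) *
        ∏ j : Fin n, ENNReal.ofReal (Real.exp (-(Δ p j * (β + ‖ξ j‖^2)))) := by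
    intro p hp ξ
    rw [← ENNReal.ofReal_prod_of_nonneg (fun j _ => (Real.exp_pos _).le),
      ← ENNReal.ofReal_mul (Real.exp_pos _).le]
    apply ENNReal.ofReal_le_ofReal
    rw [← Real.exp_sum, ← Real.exp_sum, ← Real.exp_add]
    apply Real.exp_le_exp.2
    have expand : ∑ j : Fin n, -(Δ p j * (β + ‖ξ j‖^2))
        = -β * ∑ j : Fin n, Δ p j + ∑ j : Fin n, -(Δ p j) * ‖ξ j‖ ^ 2 := by
      rw [Finset.mul_sum, ← Finset.sum_add_distrib]
      apply Finset.sum_congr rfl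
      intro j _
      ring
    rw [expand]
    have h1 : β * ∑ j : Fin n, Δ p j ≤ β * t :=
      mul_le_mul_of_nonneg_left (hsum p hp) hβ.le
    linarith
  -- inner integral bound
  have hinner : ∀ p ∈ T,
      (∫⁻ ξ : Fin n → E, ENNReal.ofReal (∏ j : Fin n,
        Real.exp (-(Δ p j) * ‖ξ j‖ ^ 2)) ∂(Measure.pi fun _ => μ)) ≤
      ENNReal.ofReal (Real.exp (β * t)) * ∏ j : Fin n, kb μ β (Δ p j) := by
    intro p hp
    have hfm : ∀ j : Fin n, Measurable fun x : E =>
        ENNReal.ofReal (Real.exp (-(Δ p j * (β + ‖x‖^2)))) := by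
      intro j
      apply ENNReal.measurable_ofReal.comp
      apply Continuous.measurable
      continuity
    have hm : Measurable fun ξ : Fin n → E =>
        ∏ j : Fin n, ENNReal.ofReal (Real.exp (-(Δ p j * (β + ‖ξ j‖^2)))) :=
      Finset.measurable_prod _ fun j _ => (hfm j).comp (measurable_pi_apply j)
    calc ∫⁻ ξ : Fin n → E, ENNReal.ofReal (∏ j : Fin n,
          Real.exp (-(Δ p j) * ‖ξ j‖ ^ 2)) ∂(Measure.pi fun _ => μ)
        ≤ ∫⁻ ξ : Fin n → E, ENNReal.ofReal (Real.exp (β * t)) *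
            ∏ j : Fin n, ENNReal.ofReal (Real.exp (-(Δ p j * (β + ‖ξ j‖^2))))
            ∂(Measure.pi fun _ => μ) := lintegral_mono (fun ξ => hpt p hp ξ)
      _ = ENNReal.ofReal (Real.exp (β * t)) * ∏ j : Fin n, kb μ β (Δ p j) := by
          rw [lintegral_const_mul _ hm]
          congr 1
          exact lintegral_pi_prod μ
            (fun j (x : E) => ENNReal.ofReal (Real.exp (-(Δ p j * (β + ‖x‖^2)))))
            hfm
  have hm2 : Measurable fun p : Fin n → ℝ => ∏ j : Fin n, kb μ β (Δ p j) :=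
    Finset.measurable_prod _ fun j _ => (kb_meas μ β).comp (hΔm j)
  calc ∫⁻ p in T, ∫⁻ ξ : Fin n → E, ENNReal.ofReal (∏ j : Fin n,
        Real.exp (-((if h : (j : ℕ) + 1 < n then p ⟨(j : ℕ) + 1, h⟩ else t) - p j) * ‖ξ j‖ ^ 2))
        ∂(Measure.pi fun _ => μ)
      ≤ ∫⁻ p in T, ENNReal.ofReal (Real.exp (β * t)) *
          ∏ j : Fin n, kb μ β (Δ p j) := by
        refine setLIntegral_mono (hm2.const_mul _) ?_
        intro p hp
        exact hinner p hp
    _ = ENNReal.ofReal (Real.exp (β * t)) * ∫⁻ p in T, ∏ j : Fin n, kb μ β (Δ p j) := by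
        rw [lintegral_const_mul _ hm2]
    _ ≤ ENNReal.ofReal (Real.exp (β * t)) * (gb μ β) ^ n := by
        apply mul_le_mul_right
        rw [← kb_int μ β hβ]
        exact simplex_bound n t (kb μ β) (kb_meas μ β)

theorem stmt_13 (d : ℕ) (μ : Measure (EuclideanSpace ℝ (Fin d)))
    (hD : ∫⁻ ξ, ENNReal.ofReal ((1 + ‖ξ‖ ^ 2)⁻¹) ∂μ < ⊤)
    (t γ : ℝ) (ht : 0 < t) (hγ : 0 < γ) :
    ∑' n : ℕ, ENNReal.ofReal (γ ^ n) * hSeq d n μ t < ⊤ := by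
  haveI : SigmaFinite μ := sf_of_dalang μ hD
  obtain ⟨m, hm⟩ : ∃ m : ℕ, ENNReal.ofReal γ * gb μ (1 + (m:ℝ)) < 1 := by
    have h1 := gb_tendsto μ hD
    have h2 : Tendsto (fun m : ℕ => ENNReal.ofReal γ * gb μ (1 + (m:ℝ)))
        atTop (𝓝 0) := by
      have := ENNReal.Tendsto.const_mul (a := ENNReal.ofReal γ) h1 (Or.inr ENNReal.ofReal_ne_top)
      simpa using this
    exact (h2.eventually_lt_const zero_lt_one).exists
  set β := 1 + (m:ℝ) with hβdef
  have hβ : 0 < β := by positivity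
  calc ∑' n : ℕ, ENNReal.ofReal (γ ^ n) * hSeq d n μ t
      ≤ ∑' n : ℕ, ENNReal.ofReal (Real.exp (β * t)) *
          (ENNReal.ofReal γ * gb μ β) ^ n := by
        apply ENNReal.tsum_le_tsum
        intro n
        calc ENNReal.ofReal (γ ^ n) * hSeq d n μ t
            ≤ ENNReal.ofReal (γ ^ n) *
              (ENNReal.ofReal (Real.exp (β * t)) * (gb μ β) ^ n) :=
              mul_le_mul_right (hSeq_bound μ t β ht hβ n) _
          _ = ENNReal.ofReal (Real.exp (β * t)) *
              (ENNReal.ofReal γ * gb μ β) ^ n := by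
              rw [ENNReal.ofReal_pow hγ.le, mul_pow]
              ring
    _ = ENNReal.ofReal (Real.exp (β * t)) *
        ∑' n : ℕ, (ENNReal.ofReal γ * gb μ β) ^ n := ENNReal.tsum_mul_left
    _ < ⊤ := by
        apply ENNReal.mul_lt_top ENNReal.ofReal_lt_top
        rw [ENNReal.tsum_geometric]
        rw [ENNReal.inv_lt_top]
        exact tsub_pos_of_lt hm

end BalanChenAux
end
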